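/- Let 2 ≤ α ≤ 3 and let m ≥ 1 be an integer. Then m^{−α} · ∑_{n=1}^m n^{α−1} ≤ 1/α + 1/(2m) + (α−1)/(12m²). -/

import Mathlib

open Real

set_option maxHeartbeats 2000000 in
private lemma cert_poly (g x : ℝ) (hg0 : 0 ≤ g) (hg1 : g ≤ 1) (hx : 2 ≤ x) :
    (x^8 - (g)/1*x^7 - (g*(1-g))/2*x^6 - (g*(1-g)*(2-g))/6*x^5 - (g*(1-g)*(2-g)*(3-g))/24*x^4 - (g*(1-g)*(2-g)*(3-g)*(4-g))/120*x^3 - (g*(1-g)*(2-g)*(3-g)*(4-g)*(5-g))/720*x^2 - (g*(1-g)*(2-g)*(3-g)*(4-g)*(5-g)*(6-g))/5040*x^1 - (g*(1-g)*(2-g)*(3-g)*(4-g)*(5-g)*(6-g)*(7-g))/40320*x^0) * (12*(x-1)^2 + 6*(g+2)*(x-1) + (g+2)*(g+1)) ≤ x^8 * (12*x^2 - 6*(g+2)*x + (g+2)*(g+1)) := by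
  have hs : (0:ℝ) ≤ x - 2 := by linarith
  have h1 : (0:ℝ) ≤ 1 - g := by linarith
  have hBIG : (0:ℝ) ≤ (1237/420)*(x-2)^0*g^0*(1-g)^8 + (156571/5040)*(x-2)^0*g^1*(1-g)^7 + (1310207/10080)*(x-2)^0*g^2*(1-g)^6 + (5892821/20160)*(x-2)^0*g^3*(1-g)^5 + (15856483/40320)*(x-2)^0*g^4*(1-g)^4 + (206137/630)*(x-2)^0*g^5*(1-g)^3 + (1665689/10080)*(x-2)^0*g^6*(1-g)^2 + (19499/420)*(x-2)^0*g^7*(1-g)^1 + (389/70)*(x-2)^0*g^8*(1-g)^0 + (55/6)*(x-2)^1*g^0*(1-g)^7 + (188003/2520)*(x-2)^1*g^1*(1-g)^6 + (417953/1680)*(x-2)^1*g^2*(1-g)^5 + (497821/1120)*(x-2)^1*g^3*(1-g)^4 + (9308879/20160)*(x-2)^1*g^4*(1-g)^3 + (469661/1680)*(x-2)^1*g^5*(1-g)^2 + (153479/1680)*(x-2)^1*g^6*(1-g)^1 + (1737/140)*(x-2)^1*g^7*(1-g)^0 + (1793/210)*(x-2)^2*g^0*(1-g)^6 + (147353/2520)*(x-2)^2*g^1*(1-g)^5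 + (135197/840)*(x-2)^2*g^2*(1-g)^4 + (153277/672)*(x-2)^2*g^3*(1-g)^3 + (442369/2520)*(x-2)^2*g^4*(1-g)^2 + (58339/840)*(x-2)^2*g^5*(1-g)^1 + (769/70)*(x-2)^2*g^6*(1-g)^0 + (376/105)*(x-2)^3*g^0*(1-g)^5 + (2221/105)*(x-2)^3*g^1*(1-g)^4 + (4996/105)*(x-2)^3*g^2*(1-g)^3 + (7117/140)*(x-2)^3*g^3*(1-g)^2 + (180/7)*(x-2)^3*g^4*(1-g)^1 + (171/35)*(x-2)^3*g^5*(1-g)^0 + (23/30)*(x-2)^4*g^0*(1-g)^4 + (19/5)*(x-2)^4*g^1*(1-g)^3 + (263/40)*(x-2)^4*g^2*(1-g)^2 + (139/30)*(x-2)^4*g^3*(1-g)^1 + (11/10)*(x-2)^4*g^4*(1-g)^0 + (1/15)*(x-2)^5*g^0*(1-g)^3 + (4/15)*(x-2)^5*g^1*(1-g)^2 + (19/60)*(x-2)^5*g^2*(1-g)^1 + (1/10)*(x-2)^5*g^3*(1-g)^0 := by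
    repeat' apply add_nonneg
    all_goals exact mul_nonneg (mul_nonneg (mul_nonneg (by norm_num) (pow_nonneg hs _)) (pow_nonneg hg0 _)) (pow_nonneg h1 _)
  have key : x^8 * (12*x^2 - 6*(g+2)*x + (g+2)*(g+1)) - (x^8 - (g)/1*x^7 - (g*(1-g))/2*x^6 - (g*(1-g)*(2-g))/6*x^5 - (g*(1-g)*(2-g)*(3-g))/24*x^4 - (g*(1-g)*(2-g)*(3-g)*(4-g))/120*x^3 - (g*(1-g)*(2-g)*(3-g)*(4-g)*(5-g))/720*x^2 - (g*(1-g)*(2-g)*(3-g)*(4-g)*(5-g)*(6-g))/5040*x^1 - (g*(1-g)*(2-g)*(3-g)*(4-g)*(5-g)*(6-g)*(7-g))/40320*x^0) * (12*(x-1)^2 + 6*(g+2)*(x-1) + (g+2)*(g+1)) = g * (1-g) * ((1237/420)*(x-2)^0*g^0*(1-g)^8 + (156571/5040)*(x-2)^0*g^1*(1-g)^7 + (1310207/10080)*(x-2)^0*g^2*(1-g)^6 + (5892821/20160)*(x-2)^0*g^3*(1-g)^5 + (15856483/40320)*(x-2)^0*g^4*(1-g)^4 + (206137/630)*(x-2)^0*g^5*(1-g)^3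 + (1665689/10080)*(x-2)^0*g^6*(1-g)^2 + (19499/420)*(x-2)^0*g^7*(1-g)^1 + (389/70)*(x-2)^0*g^8*(1-g)^0 + (55/6)*(x-2)^1*g^0*(1-g)^7 + (188003/2520)*(x-2)^1*g^1*(1-g)^6 + (417953/1680)*(x-2)^1*g^2*(1-g)^5 + (497821/1120)*(x-2)^1*g^3*(1-g)^4 + (9308879/20160)*(x-2)^1*g^4*(1-g)^3 + (469661/1680)*(x-2)^1*g^5*(1-g)^2 + (153479/1680)*(x-2)^1*g^6*(1-g)^1 + (1737/140)*(x-2)^1*g^7*(1-g)^0 + (1793/210)*(x-2)^2*g^0*(1-g)^6 + (147353/2520)*(x-2)^2*g^1*(1-g)^5 + (135197/840)*(x-2)^2*g^2*(1-g)^4 + (153277/672)*(x-2)^2*g^3*(1-g)^3 + (442369/2520)*(x-2)^2*g^4*(1-g)^2 + (58339/840)*(x-2)^2*g^5*(1-g)^1 + (769/70)*(x-2)^2*g^6*(1-g)^0 + (376/105)*(x-2)^3*g^0*(1-g)^5 + (2221/105)*(x-2)^3*g^1*(1-g)^4 + (4996/105)*(x-2)^3*g^2*(1-g)^3 + (7117/140)*(x-2)^3*g^3*(1-g)^2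 + (180/7)*(x-2)^3*g^4*(1-g)^1 + (171/35)*(x-2)^3*g^5*(1-g)^0 + (23/30)*(x-2)^4*g^0*(1-g)^4 + (19/5)*(x-2)^4*g^1*(1-g)^3 + (263/40)*(x-2)^4*g^2*(1-g)^2 + (139/30)*(x-2)^4*g^3*(1-g)^1 + (11/10)*(x-2)^4*g^4*(1-g)^0 + (1/15)*(x-2)^5*g^0*(1-g)^3 + (4/15)*(x-2)^5*g^1*(1-g)^2 + (19/60)*(x-2)^5*g^2*(1-g)^1 + (1/10)*(x-2)^5*g^3*(1-g)^0) := by ring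
  linarith [mul_nonneg (mul_nonneg hg0 h1) hBIG, key]

set_option maxHeartbeats 1000000 in
private lemma taylor8 (g u : ℝ) (hg0 : 0 ≤ g) (hg1 : g ≤ 1) (hu0 : 0 ≤ u) (hu : u ≤ 1/2) :
    (1-u) ^ g ≤ 1 - (g)/1*(u)^1 - (g*(1-g))/2*(u)^2 - (g*(1-g)*(2-g))/6*(u)^3 - (g*(1-g)*(2-g)*(3-g))/24*(u)^4 - (g*(1-g)*(2-g)*(3-g)*(4-g))/120*(u)^5 - (g*(1-g)*(2-g)*(3-g)*(4-g)*(5-g))/720*(u)^6 - (g*(1-g)*(2-g)*(3-g)*(4-g)*(5-g)*(6-g))/5040*(u)^7 - (g*(1-g)*(2-g)*(3-g)*(4-g)*(5-g)*(6-g)*(7-g))/40320*(u)^8 := by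
  have hd : ∀ v ∈ Set.Icc (0:ℝ) (1/2),
      HasDerivAt (fun v : ℝ => (1 - (g)/1*(v)^1 - (g*(1-g))/2*(v)^2 - (g*(1-g)*(2-g))/6*(v)^3 - (g*(1-g)*(2-g)*(3-g))/24*(v)^4 - (g*(1-g)*(2-g)*(3-g)*(4-g))/120*(v)^5 - (g*(1-g)*(2-g)*(3-g)*(4-g)*(5-g))/720*(v)^6 - (g*(1-g)*(2-g)*(3-g)*(4-g)*(5-g)*(6-g))/5040*(v)^7 - (g*(1-g)*(2-g)*(3-g)*(4-g)*(5-g)*(6-g)*(7-g))/40320*(v)^8) * (1-v) ^ (-g))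
        ((1-v) ^ (-g-1) * ((8-g) * ((g*(1-g)*(2-g)*(3-g)*(4-g)*(5-g)*(6-g)*(7-g))/40320) * v^8)) v := by
    intro v hv
    obtain ⟨hv0, hv2⟩ := hv
    have hvlt : (0:ℝ) < 1 - v := by linarith
    have hr : HasDerivAt (fun w : ℝ => (1-w) ^ (-g)) (-1 * -g * (1-v) ^ (-g-1)) v := by
      exact ((hasDerivAt_id v).const_sub 1).rpow_const (Or.inl (ne_of_gt hvlt))
    have hT := ((((((((hasDerivAt_const v (1:ℝ)).sub ((hasDerivAt_pow 1 v).const_mul ((g)/1))).sub ((hasDerivAt_pow 2 v).const_mul ((g*(1-g))/2))).sub ((hasDerivAt_pow 3 v).const_mul ((g*(1-g)*(2-g))/6))).sub ((hasDerivAt_pow 4 v).const_mul ((g*(1-g)*(2-g)*(3-g))/24))).sub ((hasDerivAt_pow 5 v).const_mul ((g*(1-g)*(2-g)*(3-g)*(4-g))/120))).sub ((hasDerivAt_pow 6 v).const_mul ((g*(1-g)*(2-g)*(3-g)*(4-g)*(5-g))/720))).sub ((hasDerivAt_pow 7 v).const_mul ((g*(1-g)*(2-g)*(3-g)*(4-g)*(5-g)*(6-g))/5040))).sub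 ((hasDerivAt_pow 8 v).const_mul ((g*(1-g)*(2-g)*(3-g)*(4-g)*(5-g)*(6-g)*(7-g))/40320))
    have hm := hT.mul hr
    refine hm.congr_deriv ?_
    have e1 : (1-v) ^ (-g) = (1-v) ^ (-g-1) * (1-v) := by
      rw [← Real.rpow_add_one (ne_of_gt hvlt) (-g-1)]
      congr 1
      ring
    rw [e1]
    push_cast
    simp only [Pi.sub_apply]
    ring
  have mono : MonotoneOn (fun v : ℝ => (1 - (g)/1*(v)^1 - (g*(1-g))/2*(v)^2 - (g*(1-g)*(2-g))/6*(v)^3 - (g*(1-g)*(2-g)*(3-g))/24*(v)^4 - (g*(1-g)*(2-g)*(3-g)*(4-g))/120*(v)^5 - (g*(1-g)*(2-g)*(3-g)*(4-g)*(5-g))/720*(v)^6 - (g*(1-g)*(2-g)*(3-g)*(4-g)*(5-g)*(6-g))/5040*(v)^7 - (g*(1-g)*(2-g)*(3-g)*(4-g)*(5-g)*(6-g)*(7-g))/40320*(v)^8) * (1-v) ^ (-g)) (Set.Icc (0:ℝ) (1/2)) := by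
    apply monotoneOn_of_deriv_nonneg (convex_Icc _ _)
    · intro v hv
      exact (hd v hv).continuousAt.continuousWithinAt
    · intro v hv
      rw [interior_Icc] at hv
      exact (hd v (Set.mem_Icc_of_Ioo hv)).differentiableAt.differentiableWithinAt
    · intro v hv
      rw [interior_Icc] at hv
      rw [(hd v (Set.mem_Icc_of_Ioo hv)).deriv]
      have hv0 : (0:ℝ) ≤ v := le_of_lt hv.1
      have hv2 : v ≤ 1/2 := le_of_lt hv.2
      have hd8 : (0:ℝ) ≤ (g*(1-g)*(2-g)*(3-g)*(4-g)*(5-g)*(6-g)*(7-g))/40320 := div_nonneg (mul_nonneg (mul_nonneg (mul_nonneg (mul_nonneg (mul_nonneg (mul_nonneg (mul_nonneg hg0 (by linarith)) (by linarith)) (by linarith)) (by linarith)) (by linarith)) (by linarith)) (by linarith)) (by norm_num)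
      exact mul_nonneg (Real.rpow_nonneg (by linarith) _)
        (mul_nonneg (mul_nonneg (by linarith) hd8) (pow_nonneg hv0 8))
  have h0m : (0:ℝ) ∈ Set.Icc (0:ℝ) (1/2) := by norm_num
  have hum : u ∈ Set.Icc (0:ℝ) (1/2) := Set.mem_Icc.mpr ⟨hu0, hu⟩
  have hmono := mono h0m hum hu0
  simp only at hmono
  have hF0 : (1 - (g)/1*((0:ℝ))^1 - (g*(1-g))/2*((0:ℝ))^2 - (g*(1-g)*(2-g))/6*((0:ℝ))^3 - (g*(1-g)*(2-g)*(3-g))/24*((0:ℝ))^4 - (g*(1-g)*(2-g)*(3-g)*(4-g))/120*((0:ℝ))^5 - (g*(1-g)*(2-g)*(3-g)*(4-g)*(5-g))/720*((0:ℝ))^6 - (g*(1-g)*(2-g)*(3-g)*(4-g)*(5-g)*(6-g))/5040*((0:ℝ))^7 - (g*(1-g)*(2-g)*(3-g)*(4-g)*(5-g)*(6-g)*(7-g))/40320*((0:ℝ))^8) * ((1:ℝ)-0) ^ (-g) = 1 := by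
    norm_num [Real.one_rpow]
  rw [hF0] at hmono
  have hp : (0:ℝ) < (1-u) ^ g := Real.rpow_pos_of_pos (by linarith) g
  rw [Real.rpow_neg (by linarith : (0:ℝ) ≤ 1-u), ← div_eq_mul_inv, le_div_iff₀ hp, one_mul] at hmono
  exact hmono

set_option maxHeartbeats 1000000 in
private lemma step_ineq (g x : ℝ) (hg0 : 0 ≤ g) (hg1 : g ≤ 1) (hx : 2 ≤ x) :
    (x-1) ^ g * ((x-1)^2/(g+2) + (x-1)/2 + (g+1)/12) + x ^ g * x ≤ x ^ g * (x^2/(g+2) + x/2 + (g+1)/12) := by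
  have hx0 : (0:ℝ) < x := by linarith
  have hxne : x ≠ 0 := ne_of_gt hx0
  have h2pos : (0:ℝ) < g + 2 := by linarith
  have h2ne : g + 2 ≠ 0 := ne_of_gt h2pos
  have hu0 : (0:ℝ) ≤ 1/x := by positivity
  have hu2 : 1/x ≤ 1/2 := by rw [div_le_div_iff₀ hx0 (by norm_num)]; linarith
  have h1u : (0:ℝ) ≤ 1 - 1/x := by linarith
  have hxg : (0:ℝ) < x ^ g := Real.rpow_pos_of_pos hx0 g
  have hsplit : (x-1) ^ g = x ^ g * (1-1/x) ^ g := by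
    rw [← Real.mul_rpow hx0.le h1u]
    congr 1
    field_simp
  have htay := taylor8 g (1/x) hg0 hg1 hu0 hu2
  have hQ : (0:ℝ) ≤ (x-1)^2/(g+2) + (x-1)/2 + (g+1)/12 :=
    add_nonneg (add_nonneg (div_nonneg (pow_nonneg (by linarith) 2) (by linarith)) (by linarith)) (by linarith)
  have hmul : (1-1/x) ^ g * ((x-1)^2/(g+2) + (x-1)/2 + (g+1)/12) ≤ (1 - (g)/1*(1/x)^1 - (g*(1-g))/2*(1/x)^2 - (g*(1-g)*(2-g))/6*(1/x)^3 - (g*(1-g)*(2-g)*(3-g))/24*(1/x)^4 - (g*(1-g)*(2-g)*(3-g)*(4-g))/120*(1/x)^5 - (g*(1-g)*(2-g)*(3-g)*(4-g)*(5-g))/720*(1/x)^6 - (g*(1-g)*(2-g)*(3-g)*(4-g)*(5-g)*(6-g))/5040*(1/x)^7 - (g*(1-g)*(2-g)*(3-g)*(4-g)*(5-g)*(6-g)*(7-g))/40320*(1/x)^8) * ((x-1)^2/(g+2) + (x-1)/2 + (g+1)/12) := mul_le_mul_of_nonneg_right htay hQ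
  have hcert := cert_poly g x hg0 hg1 hx
  have hU : (1 - (g)/1*(1/x)^1 - (g*(1-g))/2*(1/x)^2 - (g*(1-g)*(2-g))/6*(1/x)^3 - (g*(1-g)*(2-g)*(3-g))/24*(1/x)^4 - (g*(1-g)*(2-g)*(3-g)*(4-g))/120*(1/x)^5 - (g*(1-g)*(2-g)*(3-g)*(4-g)*(5-g))/720*(1/x)^6 - (g*(1-g)*(2-g)*(3-g)*(4-g)*(5-g)*(6-g))/5040*(1/x)^7 - (g*(1-g)*(2-g)*(3-g)*(4-g)*(5-g)*(6-g)*(7-g))/40320*(1/x)^8) * x^8 = x^8 - (g)/1*x^7 - (g*(1-g))/2*x^6 - (g*(1-g)*(2-g))/6*x^5 - (g*(1-g)*(2-g)*(3-g))/24*x^4 - (g*(1-g)*(2-g)*(3-g)*(4-g))/120*x^3 - (g*(1-g)*(2-g)*(3-g)*(4-g)*(5-g))/720*x^2 - (g*(1-g)*(2-g)*(3-g)*(4-g)*(5-g)*(6-g))/5040*x^1 - (g*(1-g)*(2-g)*(3-g)*(4-g)*(5-g)*(6-g)*(7-g))/40320*x^0 := by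
    field_simp
  have h7 : (1 - (g)/1*(1/x)^1 - (g*(1-g))/2*(1/x)^2 - (g*(1-g)*(2-g))/6*(1/x)^3 - (g*(1-g)*(2-g)*(3-g))/24*(1/x)^4 - (g*(1-g)*(2-g)*(3-g)*(4-g))/120*(1/x)^5 - (g*(1-g)*(2-g)*(3-g)*(4-g)*(5-g))/720*(1/x)^6 - (g*(1-g)*(2-g)*(3-g)*(4-g)*(5-g)*(6-g))/5040*(1/x)^7 - (g*(1-g)*(2-g)*(3-g)*(4-g)*(5-g)*(6-g)*(7-g))/40320*(1/x)^8) * (12*(x-1)^2 + 6*(g+2)*(x-1) + (g+2)*(g+1)) * x^8 ≤ (12*x^2 - 6*(g+2)*x + (g+2)*(g+1)) * x^8 := by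
    rw [← hU] at hcert
    linarith [hcert]
  have h5 : (1 - (g)/1*(1/x)^1 - (g*(1-g))/2*(1/x)^2 - (g*(1-g)*(2-g))/6*(1/x)^3 - (g*(1-g)*(2-g)*(3-g))/24*(1/x)^4 - (g*(1-g)*(2-g)*(3-g)*(4-g))/120*(1/x)^5 - (g*(1-g)*(2-g)*(3-g)*(4-g)*(5-g))/720*(1/x)^6 - (g*(1-g)*(2-g)*(3-g)*(4-g)*(5-g)*(6-g))/5040*(1/x)^7 - (g*(1-g)*(2-g)*(3-g)*(4-g)*(5-g)*(6-g)*(7-g))/40320*(1/x)^8) * (12*(x-1)^2 + 6*(g+2)*(x-1) + (g+2)*(g+1)) ≤ 12*x^2 - 6*(g+2)*x + (g+2)*(g+1) := le_of_mul_le_mul_right h7 (pow_pos hx0 8)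
  have h8 := mul_le_mul_of_nonneg_right h5 (le_of_lt (inv_pos.mpr (by linarith : (0:ℝ) < 12*(g+2))))
  have hQB : ((x-1)^2/(g+2) + (x-1)/2 + (g+1)/12) = (12*(x-1)^2 + 6*(g+2)*(x-1) + (g+2)*(g+1)) * (12*(g+2))⁻¹ := by
    field_simp
    ring
  have hRA : (x^2/(g+2) + x/2 + (g+1)/12) = x + (12*x^2 - 6*(g+2)*x + (g+2)*(g+1)) * (12*(g+2))⁻¹ := by
    field_simp
    ring
  have hkey : (1 - (g)/1*(1/x)^1 - (g*(1-g))/2*(1/x)^2 - (g*(1-g)*(2-g))/6*(1/x)^3 - (g*(1-g)*(2-g)*(3-g))/24*(1/x)^4 - (g*(1-g)*(2-g)*(3-g)*(4-g))/120*(1/x)^5 - (g*(1-g)*(2-g)*(3-g)*(4-g)*(5-g))/720*(1/x)^6 - (g*(1-g)*(2-g)*(3-g)*(4-g)*(5-g)*(6-g))/5040*(1/x)^7 - (g*(1-g)*(2-g)*(3-g)*(4-g)*(5-g)*(6-g)*(7-g))/40320*(1/x)^8) * ((x-1)^2/(g+2) + (x-1)/2 + (g+1)/12) + x ≤ x^2/(g+2)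 + x/2 + (g+1)/12 := by
    rw [hQB, hRA]
    linarith [h8]
  calc (x-1) ^ g * ((x-1)^2/(g+2) + (x-1)/2 + (g+1)/12) + x ^ g * x
      = x ^ g * ((1-1/x) ^ g * ((x-1)^2/(g+2) + (x-1)/2 + (g+1)/12)) + x ^ g * x := by rw [hsplit]; ring
    _ ≤ x ^ g * ((1 - (g)/1*(1/x)^1 - (g*(1-g))/2*(1/x)^2 - (g*(1-g)*(2-g))/6*(1/x)^3 - (g*(1-g)*(2-g)*(3-g))/24*(1/x)^4 - (g*(1-g)*(2-g)*(3-g)*(4-g))/120*(1/x)^5 - (g*(1-g)*(2-g)*(3-g)*(4-g)*(5-g))/720*(1/x)^6 - (g*(1-g)*(2-g)*(3-g)*(4-g)*(5-g)*(6-g))/5040*(1/x)^7 - (g*(1-g)*(2-g)*(3-g)*(4-g)*(5-g)*(6-g)*(7-g))/40320*(1/x)^8) * ((x-1)^2/(g+2) + (x-1)/2 + (g+1)/12)) + x ^ g * x := by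
        linarith [mul_le_mul_of_nonneg_left hmul hxg.le]
    _ = x ^ g * ((1 - (g)/1*(1/x)^1 - (g*(1-g))/2*(1/x)^2 - (g*(1-g)*(2-g))/6*(1/x)^3 - (g*(1-g)*(2-g)*(3-g))/24*(1/x)^4 - (g*(1-g)*(2-g)*(3-g)*(4-g))/120*(1/x)^5 - (g*(1-g)*(2-g)*(3-g)*(4-g)*(5-g))/720*(1/x)^6 - (g*(1-g)*(2-g)*(3-g)*(4-g)*(5-g)*(6-g))/5040*(1/x)^7 - (g*(1-g)*(2-g)*(3-g)*(4-g)*(5-g)*(6-g)*(7-g))/40320*(1/x)^8) * ((x-1)^2/(g+2) + (x-1)/2 + (g+1)/12) + x) := by ring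
    _ ≤ x ^ g * (x^2/(g+2) + x/2 + (g+1)/12) := mul_le_mul_of_nonneg_left hkey hxg.le

private lemma sum_bound (g : ℝ) (hg0 : 0 ≤ g) (hg1 : g ≤ 1) :
    ∀ M : ℕ, 1 ≤ M → ∑ n ∈ Finset.Icc 1 M, (n:ℝ) ^ (g+1)
      ≤ (M:ℝ) ^ g * ((M:ℝ)^2/(g+2) + (M:ℝ)/2 + (g+1)/12) := by
  refine Nat.le_induction ?_ ?_
  · rw [Finset.Icc_self, Finset.sum_singleton]
    push_cast
    rw [Real.one_rpow, Real.one_rpow]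
    have h2 : (0:ℝ) < g+2 := by linarith
    have e : (1:ℝ)^2/(g+2) + 1/2 + (g+1)/12 - 1 = ((1-g)*(2-g))/(12*(g+2)) := by
      field_simp
      ring
    nlinarith [div_nonneg (mul_nonneg (by linarith : (0:ℝ) ≤ 1-g) (by linarith : (0:ℝ) ≤ 2-g)) (by linarith : (0:ℝ) ≤ 12*(g+2)), e]
  · intro n hn ih
    rw [Finset.sum_Icc_succ_top (by omega : 1 ≤ n+1)]
    have hn1 : (1:ℝ) ≤ (n:ℝ) := by exact_mod_cast hn
    have hx : (2:ℝ) ≤ (n:ℝ)+1 := by linarith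
    have hstep := step_ineq g ((n:ℝ)+1) hg0 hg1 hx
    have hcast : ((n:ℝ)+1) - 1 = (n:ℝ) := by ring
    rw [hcast] at hstep
    have hne : (n:ℝ)+1 ≠ 0 := by linarith
    have hrp : ((n:ℝ)+1) ^ (g+1) = ((n:ℝ)+1) ^ g * ((n:ℝ)+1) := Real.rpow_add_one hne g
    push_cast
    rw [hrp]
    linarith [ih, hstep]

theorem partial_sum_upper_bound_two_three (α : ℝ) (hα1 : 2 ≤ α) (hα2 : α ≤ 3) (m : ℕ+) :
    (m : ℝ) ^ (-α) * ∑ n ∈ Finset.Icc 1 (m : ℕ), (n : ℝ) ^ (α - 1)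
      ≤ 1/α + 1/(2*(m : ℝ)) + (α - 1)/(12*(m : ℝ)^2) := by
  have hg0 : 0 ≤ α - 2 := by linarith
  have hg1 : α - 2 ≤ 1 := by linarith
  have hM : 1 ≤ (m:ℕ) := m.one_le
  have hMR : (1:ℝ) ≤ ((m:ℕ):ℝ) := by exact_mod_cast hM
  have hMpos : (0:ℝ) < ((m:ℕ):ℝ) := by linarith
  have hMne : ((m:ℕ):ℝ) ≠ 0 := ne_of_gt hMpos
  have hαne : α ≠ 0 := by linarith
  have hsum := sum_bound (α-2) hg0 hg1 (m:ℕ) hM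
  have hexp : ∀ n ∈ Finset.Icc 1 (m:ℕ), (n:ℝ) ^ (α-1) = (n:ℝ) ^ ((α-2)+1) := by
    intro n _
    rw [show α-1 = α-2+1 by ring]
  rw [Finset.sum_congr rfl hexp]
  have hnn : (0:ℝ) ≤ ((m:ℕ):ℝ) ^ (-α) := Real.rpow_nonneg hMpos.le _
  have h2 := mul_le_mul_of_nonneg_left hsum hnn
  refine le_trans h2 ?_
  rw [← mul_assoc]
  have e1 : ((m:ℕ):ℝ) ^ (-α) * ((m:ℕ):ℝ) ^ (α-2) = (((m:ℕ):ℝ)^2)⁻¹ := by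
    rw [← Real.rpow_add hMpos]
    rw [show -α + (α-2) = ((-2:ℤ):ℝ) by push_cast; ring]
    rw [Real.rpow_intCast]
    rw [zpow_neg]
    norm_cast
  rw [e1]
  have e3 : (((m:ℕ):ℝ)^2)⁻¹ * (((m:ℕ):ℝ)^2/(α-2+2) + ((m:ℕ):ℝ)/2 + ((α-2)+1)/12)
      = 1/α + 1/(2*((m:ℕ):ℝ)) + (α-1)/(12*((m:ℕ):ℝ)^2) := by
    field_simp
    ring
  rw [e3]
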